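/- arXiv:2209.06715 — 6 statements merged into one kernel-verified Lean document; each statement's English description precedes it below -/
import Mathlib

section
/- Let A : ℝ^N → ℝ^m be a linear map, v ∈ ker A with v ≠ 0, and S a finite subset of (ker A)ᗮ with 0 ∉ S. Set M₁ = S ∪ {0, v}. Then the optimality constant of (A, M₁) equals ‖v‖/2, and the infimum is attained: there exists a reconstruction map φ : ℝ^m → ℝ^N with φ(A s) = s for all s ∈ S and φ(0) = v/2, whose worst-case error on M₁ is exactly ‖v‖/2. -/
open scoped ENNReal

/-- Worst-case (ℓ²) reconstruction error of `φ` on the set `M₁` for the forward map `A`. -/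
noncomputable def worstError {N m : ℕ}
    (A : EuclideanSpace ℝ (Fin N) →ₗ[ℝ] EuclideanSpace ℝ (Fin m))
    (M₁ : Set (EuclideanSpace ℝ (Fin N)))
    (φ : EuclideanSpace ℝ (Fin m) → EuclideanSpace ℝ (Fin N)) : ℝ≥0∞ :=
  ⨆ x : M₁, (‖φ (A (x : EuclideanSpace ℝ (Fin N))) - (x : EuclideanSpace ℝ (Fin N))‖₊ : ℝ≥0∞)

/-- Optimality constant of the pair `(A, M₁)`: the infimum of the worst-case error
over all reconstruction maps. -/
noncomputable def optConst {N m : ℕ}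
    (A : EuclideanSpace ℝ (Fin N) →ₗ[ℝ] EuclideanSpace ℝ (Fin m))
    (M₁ : Set (EuclideanSpace ℝ (Fin N))) : ℝ≥0∞ :=
  ⨅ φ : EuclideanSpace ℝ (Fin m) → EuclideanSpace ℝ (Fin N), worstError A M₁ φ

theorem ofReal_norm_eq_coe_nnnorm {E : Type*} [SeminormedAddCommGroup E] (x : E) :
    ENNReal.ofReal ‖x‖ = (‖x‖₊ : ℝ≥0∞) :=
  ENNReal.ofReal_eq_coe_nnreal (norm_nonneg x)

/-- for `M₁ = S ∪ {0, v}` with `S ⊆ (ker A)ᗮ` finite, `0 ∉ S` and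
`0 ≠ v ∈ ker A`, the optimality constant equals `‖v‖/2` and is attained by a map that
interpolates `S` and sends `0` to `v/2`. -/
theorem stmt_1 (N m : ℕ)
    (A : EuclideanSpace ℝ (Fin N) →ₗ[ℝ] EuclideanSpace ℝ (Fin m))
    (v : EuclideanSpace ℝ (Fin N)) (hv : v ∈ LinearMap.ker A) (hv0 : v ≠ 0)
    (S : Finset (EuclideanSpace ℝ (Fin N)))
    (hS : ∀ s ∈ S, s ∈ (LinearMap.ker A)ᗮ)
    (h0S : (0 : EuclideanSpace ℝ (Fin N)) ∉ S) :
    optConst A ((S : Set (EuclideanSpace ℝ (Fin N))) ∪ {0, v}) = ENNReal.ofReal (‖v‖ / 2) ∧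
    ∃ φ : EuclideanSpace ℝ (Fin m) → EuclideanSpace ℝ (Fin N),
      (∀ s ∈ S, φ (A s) = s) ∧ φ 0 = (2 : ℝ)⁻¹ • v ∧
      worstError A ((S : Set (EuclideanSpace ℝ (Fin N))) ∪ {0, v}) φ =
        ENNReal.ofReal (‖v‖ / 2) := by
  classical
  set M : Set (EuclideanSpace ℝ (Fin N)) := (S : Set (EuclideanSpace ℝ (Fin N))) ∪ {0, v} with hM
  have h0M : (0 : EuclideanSpace ℝ (Fin N)) ∈ M := Or.inr (Or.inl rfl)
  have hvM : v ∈ M := Or.inr (Or.inr rfl)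
  have hAv : A v = 0 := LinearMap.mem_ker.mp hv
  have hker_of : ∀ s ∈ (LinearMap.ker A)ᗮ, A s = 0 → s = 0 := by
    intro s hso hAs
    exact Submodule.disjoint_def.mp (Submodule.orthogonal_disjoint _) s
      (LinearMap.mem_ker.mpr hAs) hso
  have hinj : ∀ s₁ ∈ S, ∀ s₂ ∈ S, A s₁ = A s₂ → s₁ = s₂ := by
    intro s₁ h₁ s₂ h₂ h
    have hso : s₁ - s₂ ∈ (LinearMap.ker A)ᗮ := Submodule.sub_mem _ (hS s₁ h₁) (hS s₂ h₂)
    exact sub_eq_zero.mp (hker_of _ hso (by simp [map_sub, h]))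
  have hAne : ∀ s ∈ S, A s ≠ 0 := by
    intro s hs hc
    exact h0S (by rw [← hker_of s (hS s hs) hc] at h0S ⊢; exact hs)
  -- the reconstruction map
  set φ : EuclideanSpace ℝ (Fin m) → EuclideanSpace ℝ (Fin N) :=
    fun y => if h : ∃ s, s ∈ S ∧ A s = y then h.choose else (2 : ℝ)⁻¹ • v with hφ
  have hφS : ∀ s ∈ S, φ (A s) = s := by
    intro s hs
    have h : ∃ t, t ∈ S ∧ A t = A s := ⟨s, hs, rfl⟩
    rw [hφ]; simp only [dif_pos h]
    exact hinj _ h.choose_spec.1 _ hs h.choose_spec.2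
  have hφ0 : φ 0 = (2 : ℝ)⁻¹ • v := by
    rw [hφ]; simp only []
    rw [dif_neg]
    rintro ⟨s, hs, hAs⟩
    exact hAne s hs hAs
  -- norm facts
  have hhalf : ‖(2 : ℝ)⁻¹ • v‖ = ‖v‖ / 2 := by
    rw [norm_smul, Real.norm_eq_abs, abs_of_pos (by norm_num : (0:ℝ) < (2:ℝ)⁻¹)]
    ring
  have hterm0 : (‖φ (A (0 : EuclideanSpace ℝ (Fin N))) - 0‖₊ : ℝ≥0∞)
      = ENNReal.ofReal (‖v‖ / 2) := by
    rw [map_zero, sub_zero, hφ0, ← ofReal_norm_eq_coe_nnnorm, hhalf]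
  have htermv : (‖φ (A v) - v‖₊ : ℝ≥0∞) = ENNReal.ofReal (‖v‖ / 2) := by
    rw [hAv, hφ0, ← ofReal_norm_eq_coe_nnnorm]
    have : (2 : ℝ)⁻¹ • v - v = -((2 : ℝ)⁻¹ • v) := by
      rw [← neg_smul]; module
    rw [this, norm_neg, hhalf]
  -- worst error of φ
  have hWE : worstError A M φ = ENNReal.ofReal (‖v‖ / 2) := by
    apply le_antisymm
    · apply iSup_le
      rintro ⟨x, hx⟩
      rcases hx with hx | hx | hx
      · show (‖φ (A x) - x‖₊ : ℝ≥0∞) ≤ _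
        rw [hφS x (Finset.mem_coe.mp hx), sub_self, nnnorm_zero, ENNReal.coe_zero]
        exact zero_le
      · show (‖φ (A x) - x‖₊ : ℝ≥0∞) ≤ _
        have hx' : x = 0 := hx
        subst hx'; exact le_of_eq hterm0
      · show (‖φ (A x) - x‖₊ : ℝ≥0∞) ≤ _
        have hx' : x = v := hx
        subst hx'; exact le_of_eq htermv
    · rw [← hterm0]
      exact le_iSup (fun x : M =>
        (‖φ (A (x : EuclideanSpace ℝ (Fin N))) - (x : EuclideanSpace ℝ (Fin N))‖₊ : ℝ≥0∞))
        ⟨0, h0M⟩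
  -- lower bound for every reconstruction map
  have hlow : ∀ ψ : EuclideanSpace ℝ (Fin m) → EuclideanSpace ℝ (Fin N),
      ENNReal.ofReal (‖v‖ / 2) ≤ worstError A M ψ := by
    intro ψ
    have h0 : (‖ψ (A (0 : EuclideanSpace ℝ (Fin N))) - 0‖₊ : ℝ≥0∞) ≤ worstError A M ψ :=
      le_iSup (fun x : M =>
        (‖ψ (A (x : EuclideanSpace ℝ (Fin N))) - (x : EuclideanSpace ℝ (Fin N))‖₊ : ℝ≥0∞))
        ⟨0, h0M⟩
    have hvv : (‖ψ (A v) - v‖₊ : ℝ≥0∞) ≤ worstError A M ψ :=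
      le_iSup (fun x : M =>
        (‖ψ (A (x : EuclideanSpace ℝ (Fin N))) - (x : EuclideanSpace ℝ (Fin N))‖₊ : ℝ≥0∞))
        ⟨v, hvM⟩
    rw [map_zero, sub_zero] at h0
    rw [hAv] at hvv
    have htri : ‖v‖ ≤ ‖ψ 0‖ + ‖ψ 0 - v‖ := by
      calc ‖v‖ = ‖ψ 0 - (ψ 0 - v)‖ := by rw [sub_sub_cancel]
        _ ≤ ‖ψ 0‖ + ‖ψ 0 - v‖ := norm_sub_le _ _
    rcases max_cases ‖ψ 0‖ ‖ψ 0 - v‖ with ⟨heq, hge⟩ | ⟨heq, hge⟩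
    · calc ENNReal.ofReal (‖v‖ / 2) ≤ ENNReal.ofReal ‖ψ 0‖ :=
            ENNReal.ofReal_le_ofReal (by linarith)
        _ = (‖ψ 0‖₊ : ℝ≥0∞) := ofReal_norm_eq_coe_nnnorm _
        _ ≤ _ := h0
    · calc ENNReal.ofReal (‖v‖ / 2) ≤ ENNReal.ofReal ‖ψ 0 - v‖ :=
            ENNReal.ofReal_le_ofReal (by linarith)
        _ = (‖ψ 0 - v‖₊ : ℝ≥0∞) := ofReal_norm_eq_coe_nnnorm _
        _ ≤ _ := hvv
  refine ⟨le_antisymm ?_ (le_iInf hlow), φ, hφS, hφ0, hWE⟩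
  calc optConst A M ≤ worstError A M φ := iInf_le _ φ
    _ = ENNReal.ofReal (‖v‖ / 2) := hWE
end

section
/- Let A : ℝ^N → ℝ^m be a nonzero linear map with nontrivial kernel, v ∈ ker A with v ≠ 0, e ∈ (ker A)ᗮ with ‖e‖ = 1, and θ = min(1, ‖A‖_op^{-1}). For n ∈ ℕ set wₙ = v + θ 4^{-n} e. Then: (i) ‖(wₙ, A wₙ) − (v, 0)‖ ≤ √2 · 4^{-n} in ℝ^N × ℝ^m (with the ℓ² product norm), so the data pair (wₙ, A wₙ) is within √2·4^{-n} of the pair (v, 0); (ii) nevertheless, every map φ₁ : ℝ^m → ℝ^N with φ₁(0) = 0 (in particular any map achieving worst-case error 0 on a set containing 0) and every map φ₂ : ℝ^m → ℝ^N whose worst-case error on {0, v} is at most ‖v‖/2 (in particular any optimal map for a set containing {0, v}) satisfy ‖φ₁(0) − φ₂(0)‖ = ‖v‖/2, and hence sup_{y ∈ ℝ^m} ‖φ₁(y) − φ₂(y)‖ ≥ ‖v‖/2. -/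
open scoped ENNReal

/-- the data pairs `(wₙ, A wₙ)` with `wₙ = v + θ 4⁻ⁿ e` converge to `(v, 0)`
at rate `√2 · 4⁻ⁿ` (ℓ² product norm), yet any map fixing `0` and any map with worst-case
error at most `‖v‖/2` on `{0, v}` are uniformly `‖v‖/2` apart. -/
theorem stmt_3 (N m : ℕ)
    (A : EuclideanSpace ℝ (Fin N) →ₗ[ℝ] EuclideanSpace ℝ (Fin m)) (hA : A ≠ 0)
    (hker : LinearMap.ker A ≠ ⊥)
    (v : EuclideanSpace ℝ (Fin N)) (hv : v ∈ LinearMap.ker A) (hv0 : v ≠ 0)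
    (e : EuclideanSpace ℝ (Fin N)) (he : e ∈ (LinearMap.ker A)ᗮ) (henorm : ‖e‖ = 1)
    (θ : ℝ) (hθ : θ = min 1 ‖LinearMap.toContinuousLinearMap A‖⁻¹)
    (n : ℕ) (w : EuclideanSpace ℝ (Fin N)) (hw : w = v + (θ * (4 : ℝ)⁻¹ ^ n) • e) :
    Real.sqrt (‖w - v‖ ^ 2 + ‖A w - 0‖ ^ 2) ≤ Real.sqrt 2 * (4 : ℝ)⁻¹ ^ n ∧
    ∀ φ₁ φ₂ : EuclideanSpace ℝ (Fin m) → EuclideanSpace ℝ (Fin N),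
      φ₁ 0 = 0 →
      worstError A {0, v} φ₂ ≤ ENNReal.ofReal (‖v‖ / 2) →
      ‖φ₁ 0 - φ₂ 0‖ = ‖v‖ / 2 ∧
      ENNReal.ofReal (‖v‖ / 2) ≤
        ⨆ y : EuclideanSpace ℝ (Fin m), (‖φ₁ y - φ₂ y‖₊ : ℝ≥0∞) := by
  constructor
  · -- Part (i)
    have hθ0 : 0 ≤ θ := by
      rw [hθ]; exact le_min zero_le_one (inv_nonneg.2 (norm_nonneg _))
    have hθ1 : θ ≤ 1 := by rw [hθ]; exact min_le_left _ _
    have hθC : θ * ‖LinearMap.toContinuousLinearMap A‖ ≤ 1 := by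
      have hC : 0 < ‖LinearMap.toContinuousLinearMap A‖ := by
        rw [norm_pos_iff]
        intro h
        exact hA (LinearMap.ext fun x => by simpa using congrArg (fun f => f x) h)
      have : θ ≤ ‖LinearMap.toContinuousLinearMap A‖⁻¹ := by
        rw [hθ]; exact min_le_right _ _
      calc θ * ‖LinearMap.toContinuousLinearMap A‖
          ≤ ‖LinearMap.toContinuousLinearMap A‖⁻¹ * ‖LinearMap.toContinuousLinearMap A‖ :=
            mul_le_mul_of_nonneg_right this (le_of_lt hC)
        _ = 1 := inv_mul_cancel₀ (ne_of_gt hC)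
    have hpow0 : (0:ℝ) ≤ (4 : ℝ)⁻¹ ^ n := by positivity
    have h1 : ‖w - v‖ ≤ (4 : ℝ)⁻¹ ^ n := by
      rw [hw]
      simp only [add_sub_cancel_left, norm_smul, henorm, mul_one]
      rw [Real.norm_eq_abs, abs_of_nonneg (mul_nonneg hθ0 hpow0)]
      calc θ * (4:ℝ)⁻¹ ^ n ≤ 1 * (4:ℝ)⁻¹ ^ n := mul_le_mul_of_nonneg_right hθ1 hpow0
        _ = (4:ℝ)⁻¹ ^ n := one_mul _
    have h2 : ‖A w - 0‖ ≤ (4 : ℝ)⁻¹ ^ n := by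
      rw [sub_zero, hw, map_add, map_smul]
      rw [LinearMap.mem_ker] at hv
      rw [hv, zero_add, norm_smul, Real.norm_eq_abs, abs_of_nonneg (mul_nonneg hθ0 hpow0)]
      have hAe : ‖A e‖ ≤ ‖LinearMap.toContinuousLinearMap A‖ := by
        have := (LinearMap.toContinuousLinearMap A).le_opNorm e
        simpa [henorm] using this
      calc θ * (4:ℝ)⁻¹ ^ n * ‖A e‖
          ≤ θ * (4:ℝ)⁻¹ ^ n * ‖LinearMap.toContinuousLinearMap A‖ :=
            mul_le_mul_of_nonneg_left hAe (mul_nonneg hθ0 hpow0)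
        _ = θ * ‖LinearMap.toContinuousLinearMap A‖ * (4:ℝ)⁻¹ ^ n := by ring
        _ ≤ 1 * (4:ℝ)⁻¹ ^ n := mul_le_mul_of_nonneg_right hθC hpow0
        _ = (4:ℝ)⁻¹ ^ n := one_mul _
    have hsum : ‖w - v‖ ^ 2 + ‖A w - 0‖ ^ 2 ≤ 2 * ((4:ℝ)⁻¹ ^ n) ^ 2 := by
      have a := pow_le_pow_left₀ (norm_nonneg _) h1 2
      have b := pow_le_pow_left₀ (norm_nonneg _) h2 2
      linarith
    calc Real.sqrt (‖w - v‖ ^ 2 + ‖A w - 0‖ ^ 2)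
        ≤ Real.sqrt (2 * ((4:ℝ)⁻¹ ^ n) ^ 2) := Real.sqrt_le_sqrt hsum
      _ = Real.sqrt 2 * (4:ℝ)⁻¹ ^ n := by
          rw [Real.sqrt_mul (by norm_num : (0:ℝ) ≤ 2), Real.sqrt_sq hpow0]
  · -- Part (ii)
    intro φ₁ φ₂ hφ₁ hφ₂
    rw [LinearMap.mem_ker] at hv
    have hle : ∀ x ∈ ({0, v} : Set (EuclideanSpace ℝ (Fin N))),
        ‖φ₂ (A x) - x‖ ≤ ‖v‖ / 2 := by
      intro x hx
      have : (‖φ₂ (A x) - x‖₊ : ℝ≥0∞) ≤ ENNReal.ofReal (‖v‖ / 2) :=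
        le_trans (le_iSup (fun z : ({0, v} : Set (EuclideanSpace ℝ (Fin N))) =>
          (‖φ₂ (A (z : EuclideanSpace ℝ (Fin N))) - (z : EuclideanSpace ℝ (Fin N))‖₊ : ℝ≥0∞))
          ⟨x, hx⟩) hφ₂
      rw [← enorm_eq_nnnorm, ← ofReal_norm] at this
      exact (ENNReal.ofReal_le_ofReal_iff (by positivity)).1 this
    have h0 : ‖φ₂ 0‖ ≤ ‖v‖ / 2 := by
      have := hle 0 (Set.mem_insert _ _)
      simpa using this
    have hvv : ‖φ₂ 0 - v‖ ≤ ‖v‖ / 2 := by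
      have := hle v (Set.mem_insert_iff.2 (Or.inr rfl))
      simpa [hv] using this
    have htri : ‖v‖ ≤ ‖φ₂ 0‖ + ‖φ₂ 0 - v‖ := by
      have := norm_sub_le (φ₂ 0) (φ₂ 0 - v)
      simpa using this
    have heq : ‖φ₂ 0‖ = ‖v‖ / 2 := by linarith
    have hkey : ‖φ₁ 0 - φ₂ 0‖ = ‖v‖ / 2 := by
      rw [hφ₁, zero_sub, norm_neg, heq]
    refine ⟨hkey, ?_⟩
    calc ENNReal.ofReal (‖v‖ / 2) = (‖φ₁ 0 - φ₂ 0‖₊ : ℝ≥0∞) := by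
          rw [← enorm_eq_nnnorm, ← ofReal_norm, hkey]
      _ ≤ ⨆ y : EuclideanSpace ℝ (Fin m), (‖φ₁ y - φ₂ y‖₊ : ℝ≥0∞) :=
          le_iSup (fun y => (‖φ₁ y - φ₂ y‖₊ : ℝ≥0∞)) 0
end

section
/- Suppose y₁, …, y_ℓ ∈ ℝ^m are pairwise distinct and x₁, …, x_ℓ ∈ ℝ^N are arbitrary. Then the ℓ×ℓ matrix R with entries R_{ij} = 1/(1 + ‖y_i − y_j‖²) is symmetric positive definite (in particular invertible), and the function s : ℝ^m → ℝ^N defined by s(y) = X · R⁻¹ · Φ(y) interpolates the data: s(y_i) = x_i for every i = 1, …, ℓ. -/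
open scoped ENNReal

/-- The RBF kernel matrix `R` with entries `R i j = 1/(1 + ‖y i - y j‖²)`. -/
noncomputable def Rmat {m ℓ : ℕ} (y : Fin ℓ → EuclideanSpace ℝ (Fin m)) :
    Matrix (Fin ℓ) (Fin ℓ) ℝ :=
  Matrix.of fun i j => (1 + ‖y i - y j‖ ^ 2)⁻¹

/-- The `N × ℓ` matrix whose columns are `x 1, …, x ℓ`. -/
def Xmat {N ℓ : ℕ} (x : Fin ℓ → EuclideanSpace ℝ (Fin N)) : Matrix (Fin N) (Fin ℓ) ℝ :=
  Matrix.of fun a i => x i a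

/-- The feature map `Φ(z) = (1/(1+‖z-y₁‖²), …, 1/(1+‖z-y_ℓ‖²))`. -/
noncomputable def Phivec {m ℓ : ℕ} (y : Fin ℓ → EuclideanSpace ℝ (Fin m))
    (z : EuclideanSpace ℝ (Fin m)) : Fin ℓ → ℝ :=
  fun i => (1 + ‖z - y i‖ ^ 2)⁻¹

/-- Sums of the form `∑ᵢⱼ eᵢ eⱼ ⟨uᵢ,uⱼ⟩^k` are nonnegative. -/
lemma gram_pow_nonneg {ι : Type*} [Fintype ι] {m : ℕ} (u : ι → Fin m → ℝ) (e : ι → ℝ) (k : ℕ) :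
    0 ≤ ∑ i, ∑ j, e i * e j * (∑ a, u i a * u j a) ^ k := by
  have hpow : ∀ i j, (∑ a, u i a * u j a) ^ k
      = ∑ f : Fin k → Fin m, (∏ t, u i (f t)) * ∏ t, u j (f t) := by
    intro i j
    rw [← Fin.prod_const k (∑ a, u i a * u j a), Finset.prod_univ_sum]
    simp [Fintype.piFinset_univ, Finset.prod_mul_distrib]
  have h2 : ∀ f : Fin k → Fin m, (∑ i, e i * ∏ t, u i (f t)) ^ 2
      = ∑ i, ∑ j, e i * e j * ((∏ t, u i (f t)) * ∏ t, u j (f t)) := by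
    intro f
    rw [sq, Finset.sum_mul_sum]
    exact Finset.sum_congr rfl fun i _ => Finset.sum_congr rfl fun j _ => by ring
  have key : ∑ i, ∑ j, e i * e j * (∑ a, u i a * u j a) ^ k
      = ∑ f : Fin k → Fin m, (∑ i, e i * ∏ t, u i (f t)) ^ 2 :=
    calc ∑ i, ∑ j, e i * e j * (∑ a, u i a * u j a) ^ k
        = ∑ i, ∑ j, ∑ f : Fin k → Fin m,
            e i * e j * ((∏ t, u i (f t)) * ∏ t, u j (f t)) := by
          simp_rw [hpow, Finset.mul_sum]
      _ = ∑ i, ∑ f : Fin k → Fin m, ∑ j,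
            e i * e j * ((∏ t, u i (f t)) * ∏ t, u j (f t)) :=
          Finset.sum_congr rfl fun i _ => Finset.sum_comm
      _ = ∑ f : Fin k → Fin m, ∑ i, ∑ j,
            e i * e j * ((∏ t, u i (f t)) * ∏ t, u j (f t)) := Finset.sum_comm
      _ = ∑ f : Fin k → Fin m, (∑ i, e i * ∏ t, u i (f t)) ^ 2 :=
          Finset.sum_congr rfl fun f _ => (h2 f).symm
  rw [key]
  exact Finset.sum_nonneg fun f _ => sq_nonneg _

/-- The Gaussian kernel matrix is positive semidefinite. -/
lemma gauss_nonneg {ℓ m : ℕ} (y : Fin ℓ → EuclideanSpace ℝ (Fin m)) (c : Fin ℓ → ℝ) {s : ℝ}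
    (hs : 0 ≤ s) :
    0 ≤ ∑ i, ∑ j, c i * c j * Real.exp (-(s * ‖y i - y j‖ ^ 2)) := by
  set e : Fin ℓ → ℝ := fun i => c i * Real.exp (-(s * ‖y i‖ ^ 2)) with he
  set G : Fin ℓ → Fin ℓ → ℝ := fun i j => ∑ a, y i a * y j a with hG
  have hinner : ∀ i j, (inner ℝ (y i) (y j) : ℝ) = G i j := by
    intro i j
    simp [hG, PiLp.inner_apply, RCLike.inner_apply, starRingEnd_apply]
    exact Finset.sum_congr rfl fun _ _ => mul_comm _ _
  have hsplit : ∀ i j, c i * c j * Real.exp (-(s * ‖y i - y j‖ ^ 2))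
      = e i * e j * Real.exp (2 * s * G i j) := by
    intro i j
    have hn : ‖y i - y j‖ ^ 2 = ‖y i‖ ^ 2 - 2 * (inner ℝ (y i) (y j) : ℝ) + ‖y j‖ ^ 2 :=
      norm_sub_sq_real (y i) (y j)
    rw [hinner] at hn
    have harg : -(s * ‖y i - y j‖ ^ 2)
        = -(s * ‖y i‖ ^ 2) + (-(s * ‖y j‖ ^ 2) + 2 * s * G i j) := by rw [hn]; ring
    rw [harg, Real.exp_add, Real.exp_add, he]
    ring
  simp_rw [hsplit]
  have hexp : ∀ i j, e i * e j * Real.exp (2 * s * G i j)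
      = ∑' k : ℕ, e i * e j * ((2 * s * G i j) ^ k / k.factorial) := by
    intro i j
    rw [Real.exp_eq_exp_ℝ, NormedSpace.exp_eq_tsum_div, ← tsum_mul_left]
  have hsum : ∀ i j, Summable fun k : ℕ => e i * e j * ((2 * s * G i j) ^ k / k.factorial) :=
    fun i j => (Real.summable_pow_div_factorial _).mul_left _
  simp_rw [hexp]
  rw [Finset.sum_congr rfl fun i _ => (Summable.tsum_finsetSum fun j _ => hsum i j).symm,
    ← Summable.tsum_finsetSum fun i (_ : i ∈ Finset.univ) => summable_sum fun j _ => hsum i j]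
  refine tsum_nonneg fun k => ?_
  have hterm : ∀ i j, e i * e j * ((2 * s * G i j) ^ k / k.factorial)
      = ((2 * s) ^ k / k.factorial) * (e i * e j * G i j ^ k) := by
    intro i j; rw [mul_pow]; ring
  simp_rw [hterm, ← Finset.mul_sum]
  exact mul_nonneg (div_nonneg (pow_nonneg (by linarith) k) (Nat.cast_nonneg _))
    (gram_pow_nonneg (fun i a => y i a) e k)

lemma integral_exp_neg_mul_Ioi_zero {b : ℝ} (hb : 0 < b) :
    ∫ s in Set.Ioi (0 : ℝ), Real.exp (-b * s) = b⁻¹ := by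
  have hderiv : ∀ s ∈ Set.Ioi (0 : ℝ),
      HasDerivAt (fun s : ℝ => -Real.exp (-b * s) / b) (Real.exp (-b * s)) s := by
    intro s _
    have h1 : HasDerivAt (fun s : ℝ => -b * s) (-b) s := by
      simpa using (hasDerivAt_id s).const_mul (-b)
    have h2 := (h1.exp.neg.div_const b)
    refine h2.congr_deriv ?_
    rw [div_eq_iff hb.ne']
    ring
  have htend : Filter.Tendsto (fun s : ℝ => -Real.exp (-b * s) / b) Filter.atTop (nhds 0) := by
    have h0 : Filter.Tendsto (fun s : ℝ => -b * s) Filter.atTop Filter.atBot := by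
      rw [show (fun s : ℝ => -b * s) = fun s : ℝ => -(s * b) by funext s; ring]
      exact Filter.tendsto_neg_atBot_iff.mpr (Filter.tendsto_id.atTop_mul_const hb)
    have := (Real.tendsto_exp_atBot.comp h0).neg.div_const b
    simpa using this
  have hcont : ContinuousWithinAt (fun s : ℝ => -Real.exp (-b * s) / b) (Set.Ici 0) 0 :=
    (Continuous.continuousWithinAt (by fun_prop))
  have := MeasureTheory.integral_Ioi_of_hasDerivAt_of_tendsto hcont hderiv
    (exp_neg_integrableOn_Ioi 0 hb) htend
  rw [this]
  simp
  ring

/-- Positivity of the inverse-multiquadric quadratic form. -/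
lemma qf_pos {ℓ m : ℕ} (y : Fin ℓ → EuclideanSpace ℝ (Fin m)) (hy : Function.Injective y)
    (c : Fin ℓ → ℝ) (hc : c ≠ 0) :
    0 < ∑ i, ∑ j, c i * c j * (1 + ‖y i - y j‖ ^ 2)⁻¹ := by
  have hb : ∀ i j : Fin ℓ, 0 < 1 + ‖y i - y j‖ ^ 2 := fun i j => by positivity
  set F : ℝ → ℝ := fun s => ∑ i, ∑ j, c i * c j * Real.exp (-(1 + ‖y i - y j‖ ^ 2) * s)
    with hF
  have Ib : ∀ i j : Fin ℓ, MeasureTheory.IntegrableOn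
      (fun s : ℝ => c i * c j * Real.exp (-(1 + ‖y i - y j‖ ^ 2) * s)) (Set.Ioi 0) :=
    fun i j => (exp_neg_integrableOn_Ioi 0 (hb i j)).const_mul _
  have hFint : MeasureTheory.IntegrableOn F (Set.Ioi 0) :=
    MeasureTheory.integrable_finset_sum _ fun i _ =>
      MeasureTheory.integrable_finset_sum _ fun j _ => Ib i j
  -- the quadratic form equals the integral of F over (0,∞)
  have hQF : ∑ i, ∑ j, c i * c j * (1 + ‖y i - y j‖ ^ 2)⁻¹ = ∫ s in Set.Ioi (0 : ℝ), F s := by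
    rw [hF, MeasureTheory.integral_finset_sum _ fun i _ =>
      MeasureTheory.integrable_finset_sum _ fun j _ => Ib i j]
    refine Finset.sum_congr rfl fun i _ => ?_
    rw [MeasureTheory.integral_finset_sum _ fun j _ => Ib i j]
    refine Finset.sum_congr rfl fun j _ => ?_
    rw [MeasureTheory.integral_const_mul, integral_exp_neg_mul_Ioi_zero (hb i j)]
  -- F is nonnegative on [0,∞)
  have hsplit : ∀ (s : ℝ) i j, c i * c j * Real.exp (-(1 + ‖y i - y j‖ ^ 2) * s)
      = Real.exp (-s) * (c i * c j * Real.exp (-(s * ‖y i - y j‖ ^ 2))) := by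
    intro s i j
    rw [show -(1 + ‖y i - y j‖ ^ 2) * s = -s + -(s * ‖y i - y j‖ ^ 2) by ring, Real.exp_add]
    ring
  have hFnn : ∀ s : ℝ, 0 ≤ s → 0 ≤ F s := by
    intro s hs
    rw [hF]
    simp only [hsplit s, ← Finset.mul_sum]
    exact mul_nonneg (Real.exp_pos _).le (gauss_nonneg y c hs)
  -- F is positive somewhere
  have hS : 0 < ∑ i, c i ^ 2 := by
    obtain ⟨i, hi⟩ := Function.ne_iff.mp hc
    exact Finset.sum_pos' (fun i _ => sq_nonneg _) ⟨i, Finset.mem_univ i, sq_pos_of_ne_zero hi⟩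
  have hq : Filter.Tendsto (fun s : ℝ => ∑ i, ∑ j, c i * c j *
      Real.exp (-(s * ‖y i - y j‖ ^ 2))) Filter.atTop
      (nhds (∑ i : Fin ℓ, ∑ j : Fin ℓ, if i = j then c i ^ 2 else 0)) := by
    refine tendsto_finset_sum _ fun i _ => tendsto_finset_sum _ fun j _ => ?_
    by_cases h : i = j
    · subst h
      simpa [sub_self, sq] using (tendsto_const_nhds :
        Filter.Tendsto (fun _ : ℝ => c i * c i) Filter.atTop (nhds (c i * c i)))
    · have hd : 0 < ‖y i - y j‖ ^ 2 := by
        exact pow_pos (norm_pos_iff.mpr (sub_ne_zero.mpr fun hyij => h (hy hyij))) 2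
      have h0 : Filter.Tendsto (fun s : ℝ => -(s * ‖y i - y j‖ ^ 2))
          Filter.atTop Filter.atBot :=
        Filter.tendsto_neg_atBot_iff.mpr (Filter.tendsto_id.atTop_mul_const hd)
      have := (Real.tendsto_exp_atBot.comp h0).const_mul (c i * c j)
      simpa [h] using this
  have hdiag : (∑ i : Fin ℓ, ∑ j : Fin ℓ, if i = j then c i ^ 2 else 0)
      = ∑ i, c i ^ 2 := by simp
  rw [hdiag] at hq
  have hev : ∀ᶠ s : ℝ in Filter.atTop,
      (0 < ∑ i, ∑ j, c i * c j * Real.exp (-(s * ‖y i - y j‖ ^ 2))) ∧ 0 < s :=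
    (hq.eventually (eventually_gt_nhds hS)).and (Filter.eventually_gt_atTop 0)
  obtain ⟨s₀, hqs₀, hs₀⟩ := hev.exists
  have hFs₀ : 0 < F s₀ := by
    rw [hF]
    simp only [hsplit s₀, ← Finset.mul_sum]
    exact mul_pos (Real.exp_pos _) hqs₀
  -- conclude
  have hFcont : Continuous F := by
    rw [hF]; fun_prop
  have hae : 0 ≤ᵐ[MeasureTheory.volume.restrict (Set.Ioi (0 : ℝ))] F :=
    (MeasureTheory.ae_restrict_iff' measurableSet_Ioi).mpr
      (Filter.Eventually.of_forall fun s hs => hFnn s (le_of_lt hs))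
  rw [hQF, MeasureTheory.setIntegral_pos_iff_support_of_nonneg_ae hae hFint]
  have hU : IsOpen ({s : ℝ | 0 < F s} ∩ Set.Ioi 0) :=
    (isOpen_lt continuous_const hFcont).inter isOpen_Ioi
  calc (0 : ℝ≥0∞) < MeasureTheory.volume ({s : ℝ | 0 < F s} ∩ Set.Ioi 0) :=
        hU.measure_pos _ ⟨s₀, hFs₀, hs₀⟩
    _ ≤ MeasureTheory.volume (Function.support F ∩ Set.Ioi 0) :=
        MeasureTheory.measure_mono fun s hs => ⟨ne_of_gt hs.1, hs.2⟩

/-- for pairwise distinct nodes `y i`, the matrix `R` is symmetric positive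
definite (in particular invertible), and `s(y) = X R⁻¹ Φ(y)` interpolates: `s (y i) = x i`. -/
theorem stmt_4 (m N ℓ : ℕ) (hℓ : 1 ≤ ℓ)
    (y : Fin ℓ → EuclideanSpace ℝ (Fin m)) (hy : Function.Injective y)
    (x : Fin ℓ → EuclideanSpace ℝ (Fin N)) :
    (Rmat y).IsSymm ∧ (Rmat y).PosDef ∧ IsUnit (Rmat y).det ∧
    ∀ (i : Fin ℓ) (a : Fin N),
      (Xmat x * (Rmat y)⁻¹).mulVec (Phivec y (y i)) a = x i a := by
  have hsymm : (Rmat y).IsSymm := by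
    ext i j
    simp only [Matrix.transpose_apply, Rmat, Matrix.of_apply]
    rw [norm_sub_rev]
  have hpd : (Rmat y).PosDef := by
    rw [Matrix.posDef_iff_dotProduct_mulVec]
    constructor
    · ext i j
      simp only [Matrix.conjTranspose_apply, star_trivial]
      have h := congrFun (congrFun hsymm j) i
      rw [Matrix.transpose_apply] at h
      exact h.symm
    · intro v hv
      have hdp : dotProduct (star v) (Matrix.mulVec (Rmat y) v)
          = ∑ i, ∑ j, v i * v j * (1 + ‖y i - y j‖ ^ 2)⁻¹ := by
        simp only [dotProduct, Matrix.mulVec, star_trivial, Pi.star_apply,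
          Rmat, Matrix.of_apply, Finset.mul_sum]
        exact Finset.sum_congr rfl fun i _ => Finset.sum_congr rfl fun j _ => by ring
      rw [hdp]
      exact qf_pos y hy v hv
  have hdet : IsUnit (Rmat y).det := hpd.det_pos.ne'.isUnit
  refine ⟨hsymm, hpd, hdet, fun i a => ?_⟩
  have hphi : Phivec y (y i) = Matrix.mulVec (Rmat y) (Pi.single i 1) := by
    funext j
    simp only [Phivec, Rmat, Matrix.mulVec_single, Matrix.of_apply, mul_one,
      MulOpposite.op_one, one_smul, Matrix.col_apply]
    rw [norm_sub_rev]
  have hcancel : (Rmat y)⁻¹.mulVec ((Rmat y).mulVec (Pi.single i 1)) = Pi.single i 1 := by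
    rw [Matrix.mulVec_mulVec, Matrix.nonsing_inv_mul _ hdet, Matrix.one_mulVec]
  rw [hphi, ← Matrix.mulVec_mulVec, hcancel, Matrix.mulVec_single]
  simp [Xmat]
end

section
/- Let m ≥ 2, ℓ ≥ 1, j ≥ 1 and k_R ∈ ℕ. Suppose y₁, …, y_ℓ ∈ ℝ^m are pairwise distinct with ‖yᵢ‖ ≤ 1 and x₁, …, x_ℓ ∈ ℝ^N satisfy ‖xᵢ‖ ≤ 1, and let R, X, Φ be built from these data; assume R is invertible with ‖R⁻¹‖_op ≤ 2^{k_R}. Let x̃₁, …, x̃_ℓ ∈ ℝ^N and ỹ₁, …, ỹ_ℓ ∈ ℝ^m be approximations with ‖x̃ᵢ − xᵢ‖ ≤ 2^{-r} and ‖ỹᵢ − yᵢ‖ ≤ 2^{-r} for all i, with the ỹᵢ pairwise distinct, and let X̃, R̃, Φ̃ be built from the approximate data. If 2^{-r} ≤ min{ (1/7)·(1/4)·(1/(2m))·(1/ℓ²)·2^{-2 k_R}·2^{-j}, (1/7)·(1/ℓ)·2^{-k_R}·2^{-j} }, then R̃ is invertible and sup_{y ∈ ℝ^m} ‖X̃ R̃⁻¹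 Φ̃(y) − X R⁻¹ Φ(y)‖ ≤ 2^{-j}. -/
open scoped ENNReal

/-- Operator norm of a real matrix induced by the ℓ² norms. -/
noncomputable def matOpNorm {k l : ℕ} (M : Matrix (Fin k) (Fin l) ℝ) : ℝ :=
  ‖LinearMap.toContinuousLinearMap (Matrix.toEuclideanLin M)‖

/-- Interpret a plain vector as an element of Euclidean space (ℓ² norm). -/
noncomputable def toEuc {N : ℕ} (w : Fin N → ℝ) : EuclideanSpace ℝ (Fin N) :=
  (EuclideanSpace.equiv (Fin N) ℝ).symm w

open scoped Matrix.Norms.L2Operator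
open scoped Matrix

section Aux

variable {k l : ℕ}

lemma matOpNorm_eq (M : Matrix (Fin k) (Fin l) ℝ) : matOpNorm M = ‖M‖ := rfl

lemma opNorm_le_sqrt_sum (M : Matrix (Fin k) (Fin l) ℝ) :
    ‖M‖ ≤ Real.sqrt (∑ a, ∑ i, (M a i)^2) := by
  rw [Matrix.l2_opNorm_def]
  refine ContinuousLinearMap.opNorm_le_bound _ (Real.sqrt_nonneg _) (fun v => ?_)
  have hv : ‖v‖ = Real.sqrt (∑ i, (v i)^2) := by
    simp [EuclideanSpace.norm_eq, Real.norm_eq_abs, sq_abs]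
  have happ : ∀ a : Fin k, (LinearEquiv.trans Matrix.toEuclideanLin
      LinearMap.toContinuousLinearMap M) v a = ∑ i, M a i * v i := fun a => rfl
  rw [EuclideanSpace.norm_eq, hv, ← Real.sqrt_mul (by positivity)]
  apply Real.sqrt_le_sqrt
  rw [Finset.sum_mul]
  refine Finset.sum_le_sum fun a _ => ?_
  rw [happ a, Real.norm_eq_abs, sq_abs]
  exact Finset.sum_mul_sq_le_sq_mul_sq _ _ _

lemma opNorm_le_of_entries {c : ℝ} (hc : 0 ≤ c) (M : Matrix (Fin l) (Fin l) ℝ)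
    (h : ∀ a i, |M a i| ≤ c) : ‖M‖ ≤ l * c := by
  refine (opNorm_le_sqrt_sum M).trans ?_
  have hs : (∑ a, ∑ i, (M a i)^2) ≤ (l : ℝ)^2 * c^2 := by
    calc (∑ a, ∑ i, (M a i)^2) ≤ ∑ _a : Fin l, ∑ _i : Fin l, c^2 := by
          refine Finset.sum_le_sum fun a _ => Finset.sum_le_sum fun i _ => ?_
          rw [← sq_abs]; exact pow_le_pow_left₀ (abs_nonneg _) (h a i) 2
      _ = (l:ℝ)^2 * c^2 := by simp [Finset.sum_const]; ring
  refine (Real.sqrt_le_sqrt hs).trans ?_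
  rw [← mul_pow, Real.sqrt_sq (by positivity)]

lemma opNorm_le_of_cols {c : ℝ} (hc : 0 ≤ c) (M : Matrix (Fin k) (Fin l) ℝ)
    (h : ∀ i, (∑ a, (M a i)^2) ≤ c^2) : ‖M‖ ≤ Real.sqrt l * c := by
  refine (opNorm_le_sqrt_sum M).trans ?_
  have hs : (∑ a, ∑ i, (M a i)^2) ≤ (l : ℝ) * c^2 := by
    rw [Finset.sum_comm]
    calc (∑ i, ∑ a, (M a i)^2) ≤ ∑ _i : Fin l, c^2 := Finset.sum_le_sum fun i _ => h i
      _ = (l:ℝ) * c^2 := by simp [Finset.sum_const, mul_comm]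
  refine (Real.sqrt_le_sqrt hs).trans ?_
  rw [Real.sqrt_mul (by positivity), Real.sqrt_sq hc]

lemma sum_sq_toEuc (w : Fin l → ℝ) : ‖toEuc w‖ = Real.sqrt (∑ i, (w i)^2) := by
  rw [EuclideanSpace.norm_eq]
  congr 1
  refine Finset.sum_congr rfl fun i _ => ?_
  rw [Real.norm_eq_abs, sq_abs]
  rfl

lemma norm_toEuc_le {c : ℝ} (hc : 0 ≤ c) (w : Fin l → ℝ) (h : ∀ i, |w i| ≤ c) :
    ‖toEuc w‖ ≤ Real.sqrt l * c := by
  rw [sum_sq_toEuc]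
  have hs : (∑ i, (w i)^2) ≤ (l : ℝ) * c^2 := by
    calc (∑ i, (w i)^2) ≤ ∑ _i : Fin l, c^2 := by
          refine Finset.sum_le_sum fun i _ => ?_
          rw [← sq_abs]; exact pow_le_pow_left₀ (abs_nonneg _) (h i) 2
      _ = (l:ℝ) * c^2 := by simp [Finset.sum_const, mul_comm]
  refine (Real.sqrt_le_sqrt hs).trans ?_
  rw [Real.sqrt_mul (by positivity), Real.sqrt_sq hc]

lemma euc_norm_sq {N : ℕ} (v : EuclideanSpace ℝ (Fin N)) : (∑ a, (v a)^2) = ‖v‖^2 := by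
  rw [EuclideanSpace.norm_eq, Real.sq_sqrt (by positivity)]
  exact Finset.sum_congr rfl fun a _ => by rw [Real.norm_eq_abs, sq_abs]

lemma norm_toEuc_mulVec (M : Matrix (Fin k) (Fin l) ℝ) (v : Fin l → ℝ) :
    ‖toEuc (M *ᵥ v)‖ ≤ ‖M‖ * ‖toEuc v‖ :=
  M.l2_opNorm_mulVec (toEuc v)

lemma phi_lip (a b : ℝ) : |(1+a^2)⁻¹ - (1+b^2)⁻¹| ≤ |a - b| := by
  have h1 : (0:ℝ) < 1+a^2 := by positivity
  have h2 : (0:ℝ) < 1+b^2 := by positivity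
  have key : (1+a^2)⁻¹ - (1+b^2)⁻¹ = (b^2 - a^2)/((1+a^2)*(1+b^2)) := by
    field_simp
    ring
  rw [key, abs_div, abs_of_pos (by positivity : (0:ℝ) < (1+a^2)*(1+b^2)),
    div_le_iff₀ (by positivity)]
  have h3 : |b^2 - a^2| = |a - b| * |a + b| := by
    rw [← abs_mul, ← abs_neg]; congr 1; ring
  rw [h3]
  have h4 : |a + b| ≤ (1+a^2)*(1+b^2) := by
    rcases abs_cases (a+b) with ⟨h,_⟩ | ⟨h,_⟩ <;> rw [h] <;>
      nlinarith [sq_nonneg (a+1), sq_nonneg (b+1), sq_nonneg (a-1), sq_nonneg (b-1),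
        sq_nonneg (a*b)]
  exact mul_le_mul_of_nonneg_left h4 (abs_nonneg _)

lemma mat_norm_one (hl : 1 ≤ l) : ‖(1 : Matrix (Fin l) (Fin l) ℝ)‖ = 1 := by
  haveI : Nonempty (Fin l) := ⟨⟨0, hl⟩⟩
  rw [Matrix.cstar_norm_def, map_one]
  exact ContinuousLinearMap.norm_id

lemma inv_perturb (hl : 1 ≤ l) (A B : Matrix (Fin l) (Fin l) ℝ)
    (hA : IsUnit A.det) (h : ‖A⁻¹ * (B - A)‖ ≤ 1/7) :
    IsUnit B.det ∧ ‖B⁻¹‖ ≤ (7/6) * ‖A⁻¹‖ ∧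
      ‖B⁻¹ - A⁻¹‖ ≤ (7/6) * ‖A⁻¹‖ * ‖B - A‖ * ‖A⁻¹‖ := by
  haveI : CompleteSpace (Matrix (Fin l) (Fin l) ℝ) := FiniteDimensional.complete ℝ _
  set u := A⁻¹ * (B - A) with hu_def
  have hu : ‖-u‖ < 1 := by rw [norm_neg]; linarith
  have hunit : IsUnit (1 + u) := by
    have := (Units.oneSub (-u) hu).isUnit
    simpa [sub_neg_eq_add] using this
  have hBeq : B = A * (1 + u) := by
    rw [mul_add, mul_one, hu_def, ← Matrix.mul_assoc, Matrix.mul_nonsing_inv _ hA,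
      Matrix.one_mul]
    abel
  have hBunit : IsUnit B := hBeq ▸ ((Matrix.isUnit_iff_isUnit_det _).mpr hA).mul hunit
  have hBdet : IsUnit B.det := (Matrix.isUnit_iff_isUnit_det _).mp hBunit
  have hudet : IsUnit (1 + u).det := (Matrix.isUnit_iff_isUnit_det _).mp hunit
  have hid : (1 + u)⁻¹ = 1 - u * (1 + u)⁻¹ := by
    have h1 : (1 + u) * (1 + u)⁻¹ = 1 := Matrix.mul_nonsing_inv _ hudet
    rw [add_mul, one_mul] at h1
    rw [eq_sub_iff_add_eq]
    exact h1
  have hinv_norm : ‖(1 + u)⁻¹‖ ≤ 7/6 := by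
    have h2 : ‖(1 + u)⁻¹‖ ≤ 1 + (1/7) * ‖(1 + u)⁻¹‖ := by
      calc ‖(1 + u)⁻¹‖ = ‖1 - u * (1 + u)⁻¹‖ := by rw [← hid]
        _ ≤ ‖(1 : Matrix (Fin l) (Fin l) ℝ)‖ + ‖u * (1 + u)⁻¹‖ := norm_sub_le _ _
        _ ≤ 1 + (1/7) * ‖(1 + u)⁻¹‖ := by
            rw [mat_norm_one hl]
            gcongr
            exact (norm_mul_le _ _).trans (mul_le_mul_of_nonneg_right h (norm_nonneg _))
    linarith
  have hBinv : B⁻¹ = (1 + u)⁻¹ * A⁻¹ := by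
    rw [hBeq, Matrix.mul_inv_rev]
  have hB1 : ‖B⁻¹‖ ≤ (7/6) * ‖A⁻¹‖ := by
    rw [hBinv]
    exact (norm_mul_le _ _).trans (mul_le_mul_of_nonneg_right hinv_norm (norm_nonneg _))
  refine ⟨hBdet, hB1, ?_⟩
  have hdiff : B⁻¹ - A⁻¹ = B⁻¹ * (A - B) * A⁻¹ := by
    rw [mul_sub, sub_mul, mul_assoc]
    rw [Matrix.mul_nonsing_inv _ hA, Matrix.nonsing_inv_mul _ hBdet, mul_one, one_mul]
  rw [hdiff]
  calc ‖B⁻¹ * (A - B) * A⁻¹‖ ≤ ‖B⁻¹ * (A - B)‖ * ‖A⁻¹‖ := norm_mul_le _ _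
    _ ≤ ‖B⁻¹‖ * ‖A - B‖ * ‖A⁻¹‖ := by
        gcongr; exact norm_mul_le _ _
    _ ≤ (7/6) * ‖A⁻¹‖ * ‖B - A‖ * ‖A⁻¹‖ := by
        rw [norm_sub_rev A B]; gcongr

end Aux

set_option maxHeartbeats 2000000 in
/-- stability of the RBF interpolant `y ↦ X R⁻¹ Φ(y)` under perturbation
of the data by `2⁻ʳ`, with `2⁻ʳ` below the explicit threshold: the perturbed kernel
matrix is invertible and the two interpolants are uniformly `2⁻ʲ`-close. -/
theorem stmt_9 (m N ℓ j kR r : ℕ) (hm : 2 ≤ m) (hℓ : 1 ≤ ℓ) (hj : 1 ≤ j)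
    (y y' : Fin ℓ → EuclideanSpace ℝ (Fin m))
    (x x' : Fin ℓ → EuclideanSpace ℝ (Fin N))
    (hy : Function.Injective y) (hy1 : ∀ i, ‖y i‖ ≤ 1) (hx1 : ∀ i, ‖x i‖ ≤ 1)
    (hR : IsUnit (Rmat y).det)
    (hRnorm : matOpNorm (Rmat y)⁻¹ ≤ (2 : ℝ) ^ kR)
    (hy' : Function.Injective y')
    (hxr : ∀ i, ‖x' i - x i‖ ≤ ((2 : ℝ) ^ r)⁻¹)
    (hyr : ∀ i, ‖y' i - y i‖ ≤ ((2 : ℝ) ^ r)⁻¹)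
    (hr : ((2 : ℝ) ^ r)⁻¹ ≤
      min ((1 / 7) * (1 / 4) * (1 / (2 * (m : ℝ))) * (1 / (ℓ : ℝ) ^ 2) *
            ((2 : ℝ) ^ (2 * kR))⁻¹ * ((2 : ℝ) ^ j)⁻¹)
          ((1 / 7) * (1 / (ℓ : ℝ)) * ((2 : ℝ) ^ kR)⁻¹ * ((2 : ℝ) ^ j)⁻¹)) :
    IsUnit (Rmat y').det ∧
    ∀ z : EuclideanSpace ℝ (Fin m),
      ‖toEuc ((Xmat x' * (Rmat y')⁻¹).mulVec (Phivec y' z)) -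
        toEuc ((Xmat x * (Rmat y)⁻¹).mulVec (Phivec y z))‖ ≤ ((2 : ℝ) ^ j)⁻¹ := by
  classical
  set ε : ℝ := ((2:ℝ)^r)⁻¹ with hε_def
  have hε0 : 0 ≤ ε := by positivity
  set K : ℝ := (2:ℝ)^kR with hK_def
  have hK0 : 0 < K := by positivity
  set J : ℝ := ((2:ℝ)^j)⁻¹ with hJ_def
  have hJ0 : 0 < J := by positivity
  have hJhalf : J ≤ 1/2 := by
    rw [hJ_def]
    have h2j : (2:ℝ)^1 ≤ (2:ℝ)^j := pow_le_pow_right₀ (by norm_num) hj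
    calc ((2:ℝ)^j)⁻¹ ≤ ((2:ℝ)^1)⁻¹ := by
          apply inv_anti₀ (by positivity) h2j
      _ = 1/2 := by norm_num
  set L : ℝ := (ℓ:ℝ) with hL_def
  have hL1 : (1:ℝ) ≤ L := Nat.one_le_cast.mpr hℓ
  have hL0 : 0 < L := by linarith
  set S : ℝ := Real.sqrt L with hS_def
  have hS0 : 0 ≤ S := Real.sqrt_nonneg _
  have hSS : S * S = L := Real.mul_self_sqrt (by linarith)
  have hm2 : (2:ℝ) ≤ (m:ℝ) := by exact_mod_cast hm
  -- the two smallness hypotheses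
  have hεA : ε ≤ (1/7) * (1/4) * (1/(2*(m:ℝ))) * (1/L^2) * (K^2)⁻¹ * J := by
    have := hr.trans (min_le_left _ _)
    rwa [mul_comm 2 kR, pow_mul, ← hK_def] at this
  have hεB : ε ≤ (1/7) * (1/L) * K⁻¹ * J := hr.trans (min_le_right _ _)
  have hKε : L * K * ε ≤ (1/7) * J := by
    have h1 := mul_le_mul_of_nonneg_left hεB (show (0:ℝ) ≤ L * K by positivity)
    have h2 : L * K * ((1/7) * (1/L) * K⁻¹ * J) = (1/7) * J := by
      field_simp
    linarith
  have hK2ε : L^2 * K^2 * ε ≤ (1/112) * J := by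
    have h1 := mul_le_mul_of_nonneg_left hεA (show (0:ℝ) ≤ L^2 * K^2 by positivity)
    have h2 : L^2 * K^2 * ((1/7) * (1/4) * (1/(2*(m:ℝ))) * (1/L^2) * (K^2)⁻¹ * J)
        = (1/(56*(m:ℝ))) * J := by
      field_simp
      ring
    have h3 : (1/(56*(m:ℝ))) * J ≤ (1/112) * J := by
      apply mul_le_mul_of_nonneg_right _ hJ0.le
      rw [div_le_div_iff₀ (by positivity) (by norm_num)]
      linarith
    linarith
  -- entrywise bound on R' - R
  have hRdiff : ∀ a i, |(Rmat y' - Rmat y) a i| ≤ 2*ε := by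
    intro a i
    have e : (Rmat y' - Rmat y) a i
        = (1 + ‖y' a - y' i‖^2)⁻¹ - (1 + ‖y a - y i‖^2)⁻¹ := rfl
    rw [e]
    refine (phi_lip _ _).trans ?_
    have h1 : |‖y' a - y' i‖ - ‖y a - y i‖| ≤ ‖(y' a - y' i) - (y a - y i)‖ :=
      abs_norm_sub_norm_le _ _
    refine h1.trans ?_
    have e2 : (y' a - y' i) - (y a - y i) = (y' a - y a) - (y' i - y i) := by abel
    rw [e2]
    calc ‖(y' a - y a) - (y' i - y i)‖ ≤ ‖y' a - y a‖ + ‖y' i - y i‖ := norm_sub_le _ _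
      _ ≤ ε + ε := add_le_add (hyr a) (hyr i)
      _ = 2*ε := by ring
  have hE : ‖Rmat y' - Rmat y‖ ≤ L * (2*ε) :=
    opNorm_le_of_entries (by positivity) _ hRdiff
  have hRinv : ‖(Rmat y)⁻¹‖ ≤ K := by rw [← matOpNorm_eq]; exact hRnorm
  have hu7 : ‖(Rmat y)⁻¹ * (Rmat y' - Rmat y)‖ ≤ 1/7 := by
    have h1 : ‖(Rmat y)⁻¹ * (Rmat y' - Rmat y)‖ ≤ K * (L * (2*ε)) :=
      (Matrix.l2_opNorm_mul _ _).trans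
        (mul_le_mul hRinv hE (norm_nonneg _) hK0.le)
    have h2 : K * (L * (2*ε)) = 2 * (L * K * ε) := by ring
    rw [h2] at h1
    linarith
  obtain ⟨hdet', hB1, hB2⟩ := inv_perturb hℓ (Rmat y) (Rmat y') hR hu7
  refine ⟨hdet', fun z => ?_⟩
  have hB1K : ‖(Rmat y')⁻¹‖ ≤ (7/6) * K := by
    refine hB1.trans ?_; gcongr
  have hB2K : ‖(Rmat y')⁻¹ - (Rmat y)⁻¹‖ ≤ (7/6) * K * (L * (2*ε)) * K := by
    refine hB2.trans ?_
    refine mul_le_mul (mul_le_mul (mul_le_mul le_rfl hRinv (norm_nonneg _) (by norm_num))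
      hE (norm_nonneg _) (by positivity)) hRinv (norm_nonneg _) (by positivity)
  -- bounds on X matrices
  have hX : ‖Xmat x‖ ≤ S * 1 := by
    refine opNorm_le_of_cols (by norm_num) _ (fun i => ?_)
    have e : (∑ a, ((Xmat x) a i)^2) = ‖x i‖^2 := euc_norm_sq (x i)
    rw [e]
    exact pow_le_pow_left₀ (norm_nonneg _) (hx1 i) 2
  have hXd : ‖Xmat x' - Xmat x‖ ≤ S * ε := by
    refine opNorm_le_of_cols hε0 _ (fun i => ?_)
    have e : (∑ a, ((Xmat x' - Xmat x) a i)^2) = ‖x' i - x i‖^2 := euc_norm_sq (x' i - x i)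
    rw [e]
    exact pow_le_pow_left₀ (norm_nonneg _) (hxr i) 2
  -- bounds on Φ vectors
  have hPhi : ‖toEuc (Phivec y' z)‖ ≤ S * 1 := by
    refine norm_toEuc_le (by norm_num) _ (fun i => ?_)
    have e : (Phivec y' z) i = (1 + ‖z - y' i‖^2)⁻¹ := rfl
    rw [e, abs_of_pos (by positivity)]
    rw [inv_le_one_iff₀]
    right
    linarith [sq_nonneg ‖z - y' i‖]
  have hPhid : ‖toEuc (Phivec y' z - Phivec y z)‖ ≤ S * ε := by
    refine norm_toEuc_le hε0 _ (fun i => ?_)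
    have e : (Phivec y' z - Phivec y z) i
        = (1 + ‖z - y' i‖^2)⁻¹ - (1 + ‖z - y i‖^2)⁻¹ := rfl
    rw [e]
    refine (phi_lip _ _).trans ?_
    refine (abs_norm_sub_norm_le _ _).trans ?_
    have e2 : (z - y' i) - (z - y i) = y i - y' i := by abel
    rw [e2, norm_sub_rev]
    exact hyr i
  -- decomposition
  set t1 : Fin N → ℝ := ((Xmat x' - Xmat x) * (Rmat y')⁻¹) *ᵥ (Phivec y' z) with ht1
  set t2 : Fin N → ℝ := (Xmat x * ((Rmat y')⁻¹ - (Rmat y)⁻¹)) *ᵥ (Phivec y' z) with ht2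
  set t3 : Fin N → ℝ := (Xmat x * (Rmat y)⁻¹) *ᵥ (Phivec y' z - Phivec y z) with ht3
  have hdecomp : (Xmat x' * (Rmat y')⁻¹) *ᵥ (Phivec y' z)
      - (Xmat x * (Rmat y)⁻¹) *ᵥ (Phivec y z) = t1 + t2 + t3 := by
    rw [ht1, ht2, ht3, Matrix.sub_mul, Matrix.mul_sub, Matrix.sub_mulVec,
      Matrix.sub_mulVec, Matrix.mulVec_sub]
    abel
  have hsub : ∀ (a b : Fin N → ℝ), toEuc (a - b) = toEuc a - toEuc b := fun a b =>
    map_sub (EuclideanSpace.equiv (Fin N) ℝ).symm a b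
  have hadd : ∀ (a b : Fin N → ℝ), toEuc (a + b) = toEuc a + toEuc b := fun a b =>
    map_add (EuclideanSpace.equiv (Fin N) ℝ).symm a b
  have key : toEuc ((Xmat x' * (Rmat y')⁻¹) *ᵥ (Phivec y' z))
      - toEuc ((Xmat x * (Rmat y)⁻¹) *ᵥ (Phivec y z))
      = toEuc t1 + toEuc t2 + toEuc t3 := by
    rw [← hsub, hdecomp, hadd, hadd]
  -- term bounds
  have b1 : ‖toEuc t1‖ ≤ (S*ε) * ((7/6)*K) * (S*1) := by
    rw [ht1]
    refine (norm_toEuc_mulVec _ _).trans ?_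
    have hm1 : ‖(Xmat x' - Xmat x) * (Rmat y')⁻¹‖ ≤ (S*ε) * ((7/6)*K) :=
      (Matrix.l2_opNorm_mul _ _).trans
        (mul_le_mul hXd hB1K (norm_nonneg _) (by positivity))
    exact mul_le_mul hm1 hPhi (norm_nonneg _) (by positivity)
  have b2 : ‖toEuc t2‖ ≤ (S*1) * ((7/6) * K * (L * (2*ε)) * K) * (S*1) := by
    rw [ht2]
    refine (norm_toEuc_mulVec _ _).trans ?_
    have hm2' : ‖Xmat x * ((Rmat y')⁻¹ - (Rmat y)⁻¹)‖ ≤ (S*1) * ((7/6) * K * (L * (2*ε)) * K) :=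
      (Matrix.l2_opNorm_mul _ _).trans
        (mul_le_mul hX hB2K (norm_nonneg _) (by positivity))
    exact mul_le_mul hm2' hPhi (norm_nonneg _) (by positivity)
  have b3 : ‖toEuc t3‖ ≤ (S*1) * K * (S*ε) := by
    rw [ht3]
    refine (norm_toEuc_mulVec _ _).trans ?_
    have hm3 : ‖Xmat x * (Rmat y)⁻¹‖ ≤ (S*1) * K :=
      (Matrix.l2_opNorm_mul _ _).trans
        (mul_le_mul hX hRinv (norm_nonneg _) (by positivity))
    exact mul_le_mul hm3 hPhid (norm_nonneg _) (by positivity)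
  have e1 : (S*ε) * ((7/6)*K) * (S*1) = (7/6) * (L*K*ε) := by
    rw [← hSS]; ring
  have e2 : (S*1) * ((7/6) * K * (L * (2*ε)) * K) * (S*1) = (7/3) * (L^2*K^2*ε) := by
    rw [← hSS]; ring
  have e3 : (S*1) * K * (S*ε) = L*K*ε := by
    rw [← hSS]; ring
  calc ‖toEuc ((Xmat x' * (Rmat y')⁻¹) *ᵥ (Phivec y' z))
      - toEuc ((Xmat x * (Rmat y)⁻¹) *ᵥ (Phivec y z))‖
      = ‖toEuc t1 + toEuc t2 + toEuc t3‖ := by rw [key]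
    _ ≤ ‖toEuc t1‖ + ‖toEuc t2‖ + ‖toEuc t3‖ := norm_add₃_le
    _ ≤ (7/6) * (L*K*ε) + (7/3) * (L^2*K^2*ε) + L*K*ε := by
        rw [← e1, ← e2, ← e3]
        exact add_le_add (add_le_add b1 b2) b3
    _ ≤ J := by nlinarith [hKε, hK2ε, hJ0.le]
end

section
/- Let A be a real m×N matrix such that A Aᵀ is invertible (regarded also as the linear map x ↦ A x from ℝ^N to ℝ^m), and let v ∈ ker A. Define the affine map φ : ℝ^m → ℝ^N by φ(y) = Aᵀ(A Aᵀ)⁻¹ y + v/2. Then: (i) for every x ∈ ℝ^N of the form x = u + t·v with u ∈ (ker A)ᗮ and t ∈ [0,1], one has ‖φ(A x) − x‖ ≤ ‖v‖/2; hence, if v ≠ 0, for every set M₁ with {0, v} ⊆ M₁ ⊆ {u + t·v : u ∈ (ker A)ᗮ, t ∈ [0,1]}, the map φ attains the optimality constant of (A, M₁), which equals ‖v‖/2; (ii) if moreover β_min²·I ≼ A Aᵀ for some β_min > 0, then ‖Aᵀ(A Aᵀ)⁻¹‖_op ≤ 1/β_min, so φ is (1/β_min)-Lipschitz. -/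
open scoped ENNReal

open Matrix

open scoped RealInnerProductSpace

lemma tE_mul {k l n : ℕ} (M : Matrix (Fin k) (Fin l) ℝ) (P : Matrix (Fin l) (Fin n) ℝ)
    (x : EuclideanSpace ℝ (Fin n)) :
    Matrix.toEuclideanLin (M * P) x = Matrix.toEuclideanLin M (Matrix.toEuclideanLin P x) := by
  simp [Matrix.toEuclideanLin_apply, Matrix.mulVec_mulVec]

lemma tE_one {n : ℕ} (x : EuclideanSpace ℝ (Fin n)) :
    Matrix.toEuclideanLin (1 : Matrix (Fin n) (Fin n) ℝ) x = x := by
  simp [Matrix.toEuclideanLin_apply]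

lemma tE_transpose {k l : ℕ} (M : Matrix (Fin k) (Fin l) ℝ) :
    Matrix.toEuclideanLin Mᵀ = LinearMap.adjoint (Matrix.toEuclideanLin M) := by
  rw [← Matrix.toEuclideanLin_conjTranspose_eq_adjoint]
  congr 1

lemma tE_inner {n : ℕ} (M : Matrix (Fin n) (Fin n) ℝ) (x : EuclideanSpace ℝ (Fin n)) :
    ⟪x, Matrix.toEuclideanLin M x⟫ = (WithLp.equiv 2 _ x) ⬝ᵥ (M *ᵥ (WithLp.equiv 2 _ x)) := by
  simp [Matrix.toEuclideanLin_apply, PiLp.inner_apply, dotProduct]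
  exact Finset.sum_congr rfl fun _ _ => mul_comm _ _

lemma key_mem_orth {m N : ℕ} (A : Matrix (Fin m) (Fin N) ℝ)
    (y : EuclideanSpace ℝ (Fin N)) (w : EuclideanSpace ℝ (Fin m))
    (h : y = Matrix.toEuclideanLin Aᵀ w) :
    y ∈ (LinearMap.ker (Matrix.toEuclideanLin A))ᗮ := by
  rw [Submodule.mem_orthogonal]
  intro z hz
  rw [h, tE_transpose, LinearMap.adjoint_inner_right, LinearMap.mem_ker.mp hz,
    inner_zero_left]

lemma key {m N : ℕ} (A : Matrix (Fin m) (Fin N) ℝ) (hAAT : IsUnit (A * Aᵀ).det)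
    (u : EuclideanSpace ℝ (Fin N)) (hu : u ∈ (LinearMap.ker (Matrix.toEuclideanLin A))ᗮ) :
    Matrix.toEuclideanLin (Aᵀ * (A * Aᵀ)⁻¹) (Matrix.toEuclideanLin A u) = u := by
  set B := Matrix.toEuclideanLin A with hB
  set P := Matrix.toEuclideanLin (Aᵀ * (A * Aᵀ)⁻¹) (B u) with hPdef
  have hM1 : A * (Aᵀ * (A * Aᵀ)⁻¹) = 1 := by
    rw [← Matrix.mul_assoc, Matrix.mul_nonsing_inv _ hAAT]
  have hBP : B P = B u := by
    rw [hPdef, hB, ← tE_mul, hM1, tE_one]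
  have hker : u - P ∈ LinearMap.ker B := by
    rw [LinearMap.mem_ker, map_sub, hBP, sub_self]
  have hPorth : P ∈ (LinearMap.ker B)ᗮ := by
    refine key_mem_orth A P (Matrix.toEuclideanLin ((A * Aᵀ)⁻¹) (B u)) ?_
    rw [hPdef]; exact tE_mul _ _ _
  have horth : u - P ∈ (LinearMap.ker B)ᗮ := Submodule.sub_mem _ hu hPorth
  have : u - P = 0 := by
    have := (Submodule.orthogonal_disjoint (LinearMap.ker B)).le_bot ⟨hker, horth⟩
    simpa using this
  exact (sub_eq_zero.mp this).symm

set_option maxHeartbeats 1000000 in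
lemma normBound {m N : ℕ} (A : Matrix (Fin m) (Fin N) ℝ) (hAAT : IsUnit (A * Aᵀ).det)
    (βmin : ℝ) (hβ : 0 < βmin)
    (hPSD : (A * Aᵀ - (βmin ^ 2) • (1 : Matrix (Fin m) (Fin m) ℝ)).PosSemidef)
    (y : EuclideanSpace ℝ (Fin m)) :
    ‖Matrix.toEuclideanLin (Aᵀ * (A * Aᵀ)⁻¹) y‖ ≤ (1 / βmin) * ‖y‖ := by
  set B := Matrix.toEuclideanLin A with hB
  set z := Matrix.toEuclideanLin (A * Aᵀ)⁻¹ y with hz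
  have hLy : Matrix.toEuclideanLin (Aᵀ * (A * Aᵀ)⁻¹) y = Matrix.toEuclideanLin Aᵀ z :=
    tE_mul _ _ _
  have hBz : Matrix.toEuclideanLin (A * Aᵀ) z = y := by
    rw [hz, ← tE_mul, Matrix.mul_nonsing_inv _ hAAT, tE_one]
  have hBBt : Matrix.toEuclideanLin (A * Aᵀ) z = B (Matrix.toEuclideanLin Aᵀ z) :=
    tE_mul _ _ _
  -- inner product lower bound from PSD
  have hinner : βmin ^ 2 * ‖z‖ ^ 2 ≤ ⟪z, Matrix.toEuclideanLin (A * Aᵀ) z⟫ := by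
    have h2 := hPSD.dotProduct_mulVec_nonneg (WithLp.equiv 2 _ z)
    have hdot : (WithLp.equiv 2 _ z) ⬝ᵥ (WithLp.equiv 2 _ z) = ‖z‖ ^ 2 := by
      have := tE_inner (1 : Matrix (Fin m) (Fin m) ℝ) z
      rw [tE_one, real_inner_self_eq_norm_sq] at this
      simpa [Matrix.one_mulVec] using this.symm
    rw [tE_inner]
    simp only [star_trivial, Matrix.sub_mulVec, dotProduct_sub, Matrix.smul_mulVec,
      Matrix.one_mulVec, dotProduct_smul, smul_eq_mul, hdot, sub_nonneg] at h2
    linarith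
  have e1 : ‖Matrix.toEuclideanLin Aᵀ z‖ ^ 2 = ⟪z, y⟫ := by
    rw [← real_inner_self_eq_norm_sq, tE_transpose, LinearMap.adjoint_inner_left,
      ← tE_transpose, ← hBBt, hBz]
  have e2 : βmin ^ 2 * ‖z‖ ^ 2 ≤ ⟪z, y⟫ := by rw [← hBz]; exact hinner
  have e3 : ⟪z, y⟫ ≤ ‖z‖ * ‖y‖ := real_inner_le_norm z y
  have hz2 : βmin ^ 2 * ‖z‖ ≤ ‖y‖ := by
    rcases eq_or_lt_of_le (norm_nonneg z) with h | h
    · rw [← h]; simpa using norm_nonneg y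
    · nlinarith
  rw [hLy]
  have hnn : 0 ≤ ‖Matrix.toEuclideanLin Aᵀ z‖ := norm_nonneg _
  have hsq : ‖Matrix.toEuclideanLin Aᵀ z‖ ^ 2 ≤ ((1 / βmin) * ‖y‖) ^ 2 := by
    rw [e1]
    have : ‖z‖ * ‖y‖ ≤ (1 / βmin ^ 2) * ‖y‖ * ‖y‖ := by
      have : ‖z‖ ≤ (1 / βmin ^ 2) * ‖y‖ := by
        rw [div_mul_eq_mul_div, le_div_iff₀ (by positivity)]
        linarith
      nlinarith [norm_nonneg y]
    calc ⟪z, y⟫ ≤ ‖z‖ * ‖y‖ := e3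
      _ ≤ (1 / βmin ^ 2) * ‖y‖ * ‖y‖ := this
      _ = ((1 / βmin) * ‖y‖) ^ 2 := by ring
  nlinarith [mul_nonneg (le_of_lt (by positivity : (0:ℝ) < 1 / βmin)) (norm_nonneg y)]


/-- with `φ(y) = Aᵀ(AAᵀ)⁻¹ y + v/2` (pseudoinverse plus bias), one has
(i) `‖φ(Ax) - x‖ ≤ ‖v‖/2` for all `x = u + t·v`, `u ∈ (ker A)ᗮ`, `t ∈ [0,1]`, so `φ`
attains the optimality constant `‖v‖/2` of `(A, M₁)` for any `{0,v} ⊆ M₁` contained in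
that set; (ii) if `β_min² I ≼ AAᵀ` then `‖Aᵀ(AAᵀ)⁻¹‖ ≤ 1/β_min` and `φ` is
`(1/β_min)`-Lipschitz. -/
theorem stmt_12 (m N : ℕ) (A : Matrix (Fin m) (Fin N) ℝ)
    (hAAT : IsUnit (A * Aᵀ).det)
    (v : EuclideanSpace ℝ (Fin N)) (hv : v ∈ LinearMap.ker (Matrix.toEuclideanLin A)) :
    (∀ (u : EuclideanSpace ℝ (Fin N)) (t : ℝ),
        u ∈ (LinearMap.ker (Matrix.toEuclideanLin A))ᗮ → t ∈ Set.Icc (0 : ℝ) 1 →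
        ‖(Matrix.toEuclideanLin (Aᵀ * (A * Aᵀ)⁻¹)) ((Matrix.toEuclideanLin A) (u + t • v)) +
            (2 : ℝ)⁻¹ • v - (u + t • v)‖ ≤ ‖v‖ / 2) ∧
    (v ≠ 0 → ∀ M₁ : Set (EuclideanSpace ℝ (Fin N)),
        {0, v} ⊆ M₁ →
        M₁ ⊆ {z | ∃ u ∈ (LinearMap.ker (Matrix.toEuclideanLin A))ᗮ,
                  ∃ t ∈ Set.Icc (0 : ℝ) 1, z = u + t • v} →
        worstError (Matrix.toEuclideanLin A) M₁
            (fun y => (Matrix.toEuclideanLin (Aᵀ * (A * Aᵀ)⁻¹)) y + (2 : ℝ)⁻¹ • v) =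
          optConst (Matrix.toEuclideanLin A) M₁ ∧
        optConst (Matrix.toEuclideanLin A) M₁ = ENNReal.ofReal (‖v‖ / 2)) ∧
    (∀ βmin : ℝ, 0 < βmin →
        (A * Aᵀ - (βmin ^ 2) • (1 : Matrix (Fin m) (Fin m) ℝ)).PosSemidef →
        matOpNorm (Aᵀ * (A * Aᵀ)⁻¹) ≤ 1 / βmin ∧
        LipschitzWith (Real.toNNReal (1 / βmin))
          (fun y => (Matrix.toEuclideanLin (Aᵀ * (A * Aᵀ)⁻¹)) y + (2 : ℝ)⁻¹ • v)) := by
  have hBv : Matrix.toEuclideanLin A v = 0 := LinearMap.mem_ker.mp hv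
  have hpart1 : ∀ (u : EuclideanSpace ℝ (Fin N)) (t : ℝ),
      u ∈ (LinearMap.ker (Matrix.toEuclideanLin A))ᗮ → t ∈ Set.Icc (0:ℝ) 1 →
      ‖(Matrix.toEuclideanLin (Aᵀ * (A * Aᵀ)⁻¹)) ((Matrix.toEuclideanLin A) (u + t • v)) +
          (2:ℝ)⁻¹ • v - (u + t • v)‖ ≤ ‖v‖ / 2 := by
    intro u t hu ht
    have h1 : (Matrix.toEuclideanLin A) (u + t • v) = (Matrix.toEuclideanLin A) u := by
      simp [hBv]
    rw [h1, key A hAAT u hu]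
    have h2 : u + (2:ℝ)⁻¹ • v - (u + t • v) = ((2:ℝ)⁻¹ - t) • v := by module
    rw [h2, norm_smul]
    have h3 : |(2:ℝ)⁻¹ - t| ≤ 2⁻¹ := by
      rw [abs_le]
      exact ⟨by linarith [ht.2], by linarith [ht.1]⟩
    calc ‖(2:ℝ)⁻¹ - t‖ * ‖v‖ ≤ 2⁻¹ * ‖v‖ :=
          mul_le_mul_of_nonneg_right (by rwa [Real.norm_eq_abs]) (norm_nonneg v)
      _ = ‖v‖ / 2 := by ring
  refine ⟨hpart1, ?_, ?_⟩
  · intro hv0 M₁ h0v hsub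
    set φ := fun y => (Matrix.toEuclideanLin (Aᵀ * (A * Aᵀ)⁻¹)) y + (2:ℝ)⁻¹ • v with hφ
    have hup : worstError (Matrix.toEuclideanLin A) M₁ φ ≤ ENNReal.ofReal (‖v‖ / 2) := by
      rw [worstError]
      refine iSup_le fun x => ?_
      obtain ⟨u, hu, t, ht, hx⟩ := hsub x.2
      rw [← ENNReal.ofReal_coe_nnreal, coe_nnnorm]
      apply ENNReal.ofReal_le_ofReal
      simp only [hφ]
      rw [hx]
      exact hpart1 u t hu ht
    have hlow : ∀ ψ : EuclideanSpace ℝ (Fin m) → EuclideanSpace ℝ (Fin N),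
        ENNReal.ofReal (‖v‖ / 2) ≤ worstError (Matrix.toEuclideanLin A) M₁ ψ := by
      intro ψ
      have h0 : (0 : EuclideanSpace ℝ (Fin N)) ∈ M₁ := h0v (by simp)
      have hvm : v ∈ M₁ := h0v (by simp)
      have l1 : (‖ψ ((Matrix.toEuclideanLin A) ((0:EuclideanSpace ℝ (Fin N)))) -
            (0:EuclideanSpace ℝ (Fin N))‖₊ : ℝ≥0∞) ≤
          worstError (Matrix.toEuclideanLin A) M₁ ψ :=
        le_iSup (fun x : M₁ => (‖ψ ((Matrix.toEuclideanLin A) (x : EuclideanSpace ℝ (Fin N))) -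
          (x : EuclideanSpace ℝ (Fin N))‖₊ : ℝ≥0∞)) ⟨0, h0⟩
      have l2 : (‖ψ ((Matrix.toEuclideanLin A) v) - v‖₊ : ℝ≥0∞) ≤
          worstError (Matrix.toEuclideanLin A) M₁ ψ :=
        le_iSup (fun x : M₁ => (‖ψ ((Matrix.toEuclideanLin A) (x : EuclideanSpace ℝ (Fin N))) -
          (x : EuclideanSpace ℝ (Fin N))‖₊ : ℝ≥0∞)) ⟨v, hvm⟩
      rw [map_zero] at l1
      rw [hBv] at l2
      have htri : ‖v‖ ≤ ‖ψ 0 - 0‖ + ‖ψ 0 - v‖ := by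
        have he : (ψ 0 - 0) - (ψ 0 - v) = v := by abel
        calc ‖v‖ = ‖(ψ 0 - 0) - (ψ 0 - v)‖ := by rw [he]
          _ ≤ ‖ψ 0 - 0‖ + ‖ψ 0 - v‖ := norm_sub_le _ _
      rcases le_or_gt (‖v‖/2) ‖ψ 0 - 0‖ with h | h
      · calc ENNReal.ofReal (‖v‖/2) ≤ ENNReal.ofReal ‖ψ 0 - 0‖ := ENNReal.ofReal_le_ofReal h
          _ = (‖ψ 0 - 0‖₊ : ℝ≥0∞) := ofReal_norm _
          _ ≤ _ := l1
      · have h' : ‖v‖/2 ≤ ‖ψ 0 - v‖ := by linarith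
        calc ENNReal.ofReal (‖v‖/2) ≤ ENNReal.ofReal ‖ψ 0 - v‖ := ENNReal.ofReal_le_ofReal h'
          _ = (‖ψ 0 - v‖₊ : ℝ≥0∞) := ofReal_norm _
          _ ≤ _ := l2
    have hoc : optConst (Matrix.toEuclideanLin A) M₁ = ENNReal.ofReal (‖v‖ / 2) := by
      refine le_antisymm ?_ (le_iInf hlow)
      exact le_trans (iInf_le _ φ) hup
    exact ⟨le_antisymm (hup.trans hoc.ge) (iInf_le _ φ), hoc⟩
  · intro βmin hβ hPSD
    have hco : ((Real.toNNReal (1/βmin)) : ℝ) = 1/βmin := Real.coe_toNNReal _ (by positivity)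
    constructor
    · rw [matOpNorm]
      refine ContinuousLinearMap.opNorm_le_bound _ (by positivity) fun y => ?_
      simpa using normBound A hAAT βmin hβ hPSD y
    · refine LipschitzWith.of_dist_le_mul fun a b => ?_
      rw [dist_eq_norm, dist_eq_norm]
      have hd : ((Matrix.toEuclideanLin (Aᵀ * (A * Aᵀ)⁻¹)) a + (2:ℝ)⁻¹ • v) -
          ((Matrix.toEuclideanLin (Aᵀ * (A * Aᵀ)⁻¹)) b + (2:ℝ)⁻¹ • v) =
          (Matrix.toEuclideanLin (Aᵀ * (A * Aᵀ)⁻¹)) (a - b) := by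
        rw [map_sub]; abel
      rw [hd, hco]
      exact normBound A hAAT βmin hβ hPSD (a - b)
end

section
/- Let A : ℝ^N → ℝ^m be a nonzero linear map, ε₁ > 0, v ∈ ker A with ‖v‖ = 4ε₁, e ∈ (ker A)ᗮ with ‖e‖ = 1, θ = min(1, ‖A‖_op^{-1}), n ∈ ℕ, and w = θ·4^{-n}·e. Let δ ∈ (0, ε₁) and ε ≤ 2ε₁ − δ. Suppose f : ℝ^m → ℝ^N is differentiable and satisfies ‖f(0)‖ ≤ ε and ‖f(A(v+w)) − (v+w)‖ ≤ ε. Then for every K ≥ 0 such that ‖Df(c)‖_op ≤ K for all c in the segment joining 0 and A(v+w), one has K > 2δ·4^n. In other words, any map reconstructing both data points to accuracy ε ≤ 2ε₁ − δ has, somewhere on that segment, derivative of operator norm exceeding 2δ·4^n. -/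
open scoped ENNReal RealInnerProductSpace

/-- the accuracy–stability trade-off: any differentiable map `f`
reconstructing both data points `(0,0)` and `(v+w, A(v+w))` to accuracy
`ε ≤ 2ε₁ - δ` has, somewhere on the segment from `0` to `A(v+w)`, a derivative of
operator norm exceeding `2δ·4ⁿ`: every uniform bound `K` on the derivative along that
segment satisfies `K > 2δ·4ⁿ`. -/
theorem stmt_14 (m N : ℕ)
    (A : EuclideanSpace ℝ (Fin N) →ₗ[ℝ] EuclideanSpace ℝ (Fin m)) (hA : A ≠ 0)
    (ε₁ : ℝ) (hε₁ : 0 < ε₁)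
    (v : EuclideanSpace ℝ (Fin N)) (hv : v ∈ LinearMap.ker A) (hvnorm : ‖v‖ = 4 * ε₁)
    (e : EuclideanSpace ℝ (Fin N)) (he : e ∈ (LinearMap.ker A)ᗮ) (henorm : ‖e‖ = 1)
    (θ : ℝ) (hθ : θ = min 1 ‖LinearMap.toContinuousLinearMap A‖⁻¹)
    (n : ℕ) (w : EuclideanSpace ℝ (Fin N)) (hw : w = (θ * (4 : ℝ)⁻¹ ^ n) • e)
    (δ ε : ℝ) (hδ : δ ∈ Set.Ioo 0 ε₁) (hε : ε ≤ 2 * ε₁ - δ)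
    (f : EuclideanSpace ℝ (Fin m) → EuclideanSpace ℝ (Fin N)) (hf : Differentiable ℝ f)
    (hf0 : ‖f 0‖ ≤ ε) (hfw : ‖f (A (v + w)) - (v + w)‖ ≤ ε) :
    ∀ K : ℝ, 0 ≤ K →
      (∀ c ∈ segment ℝ (0 : EuclideanSpace ℝ (Fin m)) (A (v + w)), ‖fderiv ℝ f c‖ ≤ K) →
      2 * δ * 4 ^ n < K := by
  intro K hK hKb
  obtain ⟨hδ0, hδε₁⟩ := hδ
  set A' := LinearMap.toContinuousLinearMap A with hA'
  have hA'ne : A' ≠ 0 := by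
    simp only [hA', ne_eq]
    intro h
    apply hA
    have := congrArg ContinuousLinearMap.toLinearMap h
    simpa [hA'] using this
  have hApos : 0 < ‖A'‖ := norm_pos_iff.mpr hA'ne
  have hθpos : 0 < θ := by
    rw [hθ]; exact lt_min one_pos (inv_pos.mpr hApos)
  have hθA : θ * ‖A'‖ ≤ 1 := by
    have : θ ≤ ‖A'‖⁻¹ := by rw [hθ]; exact min_le_right _ _
    calc θ * ‖A'‖ ≤ ‖A'‖⁻¹ * ‖A'‖ := mul_le_mul_of_nonneg_right this (le_of_lt hApos)
      _ = 1 := inv_mul_cancel₀ (ne_of_gt hApos)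
  have h4n : (0:ℝ) < 4 ^ n := by positivity
  -- A (v + w) = A w
  have hAv : A v = 0 := hv
  have hAvw : A (v + w) = A w := by rw [map_add, hAv, zero_add]
  -- ‖A w‖ ≤ 4⁻¹ ^ n
  have hAw : ‖A w‖ ≤ (4:ℝ)⁻¹ ^ n := by
    have hAe : ‖A e‖ ≤ ‖A'‖ := by
      have := A'.le_opNorm e
      simpa [hA', henorm] using this
    have : A w = (θ * (4:ℝ)⁻¹ ^ n) • A e := by rw [hw, map_smul]
    rw [this, norm_smul]
    have h1 : |θ * (4:ℝ)⁻¹ ^ n| = θ * (4:ℝ)⁻¹ ^ n := abs_of_nonneg (by positivity)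
    rw [Real.norm_eq_abs, h1]
    have h2 : (0:ℝ) ≤ (4:ℝ)⁻¹ ^ n := by positivity
    calc θ * (4:ℝ)⁻¹ ^ n * ‖A e‖ ≤ θ * (4:ℝ)⁻¹ ^ n * ‖A'‖ :=
        mul_le_mul_of_nonneg_left hAe (by positivity)
      _ = (θ * ‖A'‖) * (4:ℝ)⁻¹ ^ n := by ring
      _ ≤ 1 * (4:ℝ)⁻¹ ^ n := mul_le_mul_of_nonneg_right hθA h2
      _ = (4:ℝ)⁻¹ ^ n := one_mul _
  -- ‖v + w‖ > 4 ε₁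
  have hvw_inner : inner ℝ v w = 0 := by
    rw [hw, inner_smul_right]
    have : inner ℝ v e = 0 := (Submodule.mem_orthogonal _ e).mp he v hv
    rw [this, mul_zero]
  have hwnorm : ‖w‖ = θ * (4:ℝ)⁻¹ ^ n := by
    rw [hw, norm_smul, henorm, mul_one]
    exact abs_of_nonneg (by positivity)
  have hwpos : 0 < ‖w‖ := by rw [hwnorm]; positivity
  have hvwnorm : 4 * ε₁ < ‖v + w‖ := by
    have hsq : ‖v + w‖ ^ 2 = ‖v‖ ^ 2 + ‖w‖ ^ 2 := by
      rw [norm_add_sq_real, hvw_inner]; ring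
    have h2 : ‖v‖ ^ 2 < ‖v + w‖ ^ 2 := by
      have := pow_pos hwpos 2
      rw [hsq]; linarith
    have h3 := lt_of_pow_lt_pow_left₀ 2 (norm_nonneg (v + w)) h2
    linarith [hvnorm ▸ h3]
  -- lower bound on ‖f (A (v+w)) - f 0‖
  have hlow : 2 * δ < ‖f (A (v + w)) - f 0‖ := by
    have htri : ‖v + w‖ ≤ ‖(v + w) - f (A (v + w))‖ + ‖f (A (v + w)) - f 0‖ + ‖f 0‖ := by
      calc ‖v + w‖ = ‖((v + w) - f (A (v + w))) + (f (A (v + w)) - f 0) + f 0‖ := by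
            congr 1; abel
        _ ≤ ‖(v + w) - f (A (v + w))‖ + ‖f (A (v + w)) - f 0‖ + ‖f 0‖ := norm_add₃_le
    have hrev : ‖(v + w) - f (A (v + w))‖ = ‖f (A (v + w)) - (v + w)‖ := norm_sub_rev _ _
    rw [hrev] at htri
    linarith
  -- mean value inequality
  have hmv := (convex_segment (0 : EuclideanSpace ℝ (Fin m)) (A (v + w))).norm_image_sub_le_of_norm_fderiv_le
    (fun x _ => hf.differentiableAt) hKb (left_mem_segment ℝ _ _) (right_mem_segment ℝ _ _)
  rw [sub_zero] at hmv
  have this : 2 * δ < K * (4:ℝ)⁻¹ ^ n := by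
    calc 2 * δ < ‖f (A (v + w)) - f 0‖ := hlow
      _ ≤ K * ‖A (v + w)‖ := hmv
      _ = K * ‖A w‖ := by rw [hAvw]
      _ ≤ K * (4:ℝ)⁻¹ ^ n := mul_le_mul_of_nonneg_left hAw hK
  have h4 : (4:ℝ)⁻¹ ^ n * 4 ^ n = 1 := by
    rw [← mul_pow]; norm_num
  calc 2 * δ * 4 ^ n < (K * (4:ℝ)⁻¹ ^ n) * 4 ^ n := mul_lt_mul_of_pos_right this h4n
    _ = K := by rw [mul_assoc, h4, mul_one]
end
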